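/- Let R be a finite local commutative ring and let g ∈ R[X] be a monic polynomial such that the ideal ⟨g⟩ of R[X] is a primary ideal (in particular ⟨g⟩ ≠ R[X]). Then the quotient ring R[X]/⟨g⟩ is a local ring. -/

import Mathlib

open Polynomial

section Defs

variable {R : Type*}

/-- An idempotent `e` of a commutative ring is *primitive* if it is nonzero and cannot be
written as a sum of two nonzero orthogonal idempotents. -/
def IsPrimitiveIdem [CommRing R] (e : R) : Prop :=
  IsIdempotentElem e ∧ e ≠ 0 ∧
    ∀ u v : R, IsIdempotentElem u → IsIdempotentElem v → u * v = 0 → e = u + v →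
      u = 0 ∨ v = 0

/-- A family of idempotents forming a complete set of pairwise orthogonal idempotents. -/
def IsCompleteOrthoIdem [CommRing R] {r : ℕ} (e : Fin r → R) : Prop :=
  (∀ i, IsIdempotentElem (e i)) ∧ (∑ i, e i) = 1 ∧
    ∀ i j, i ≠ j → e i * e j = 0

/-- A complete set of pairwise orthogonal primitive idempotents. -/
def IsCompletePrimIdem [CommRing R] {r : ℕ} (e : Fin r → R) : Prop :=
  IsCompleteOrthoIdem e ∧ ∀ i, IsPrimitiveIdem (e i)

/-- The `lam`-constacyclic shift `(a_0, …, a_(n-1)) ↦ (lam·a_(n-1), a_0, …, a_(n-2))`. -/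
def ctShift [CommRing R] {n : ℕ} [NeZero n] (lam : R) (a : Fin n → R) : Fin n → R :=
  fun i => if i = 0 then lam * a (i - 1) else a (i - 1)

/-- The dual code of a linear code of length `n` over `R`. -/
def dualCode [CommRing R] {n : ℕ} (Ccode : Submodule R (Fin n → R)) :
    Submodule R (Fin n → R) where
  carrier := {a | ∀ b ∈ Ccode, ∑ i, a i * b i = 0}
  add_mem' := by
    intro a a' ha ha' b hb
    simpa [add_mul, Finset.sum_add_distrib] using by rw [ha b hb, ha' b hb, add_zero]
  zero_mem' := by intro b hb; simp
  smul_mem' := by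
    intro c a ha b hb
    simpa [Finset.mul_sum, mul_assoc] using by rw [← Finset.mul_sum, ha b hb, mul_zero]

/-- The linear map `(a_0, …, a_(n-1)) ↦ a_0 + a_1 x + ⋯ + a_(n-1) x^(n-1)` from `R^n` to
`R[X]/⟨g⟩`. -/
noncomputable def polyLin [CommRing R] (n : ℕ) (g : R[X]) :
    (Fin n → R) →ₗ[R] (R[X] ⧸ Ideal.span {g}) where
  toFun a := Ideal.Quotient.mk _ (∑ i, C (a i) * X ^ (i : ℕ))
  map_add' a b := by
    simp only [Pi.add_apply, map_add, add_mul, Finset.sum_add_distrib]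
  map_smul' c a := by
    simp only [Pi.smul_apply, smul_eq_mul, RingHom.id_apply]
    have h : (∑ i : Fin n, C (c * a i) * X ^ (i : ℕ))
        = c • ∑ i : Fin n, C (a i) * X ^ (i : ℕ) := by
      rw [Finset.smul_sum]
      exact Finset.sum_congr rfl fun i _ => by
        rw [Polynomial.smul_eq_C_mul, ← mul_assoc, ← C_mul]
    rw [h]
    exact (Submodule.Quotient.mk_smul (Ideal.span {g}) c
      (∑ i : Fin n, C (a i) * X ^ (i : ℕ))).symm

/-- The linear code of length `n` corresponding to an ideal of `R[X]/⟨g⟩` under the usual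
identification. -/
noncomputable def idealCode [CommRing R] (n : ℕ) (g : R[X])
    (I : Ideal (R[X] ⧸ Ideal.span {g})) : Submodule R (Fin n → R) :=
  (Submodule.restrictScalars R (I : Submodule (R[X] ⧸ Ideal.span {g}) (R[X] ⧸ Ideal.span {g}))).comap
    (polyLin n g)

/-- The reciprocal `f* = a_0 x^(n-1) + a_1 x^(n-2) + ⋯ + a_(n-1)` of an element
`f = a_0 + a_1 x + ⋯ + a_(n-1) x^(n-1)` of `R[X]/⟨g⟩`, viewed in `R[X]/⟨h⟩`; the canonical
representative of degree `< n` is obtained by reduction `%ₘ g` of any representative. -/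
noncomputable def recip [CommRing R] (n : ℕ) (g h : R[X]) (f : R[X] ⧸ Ideal.span {g}) :
    R[X] ⧸ Ideal.span {h} :=
  Ideal.Quotient.mk _ (((Ideal.Quotient.mk_surjective f).choose %ₘ g).reflect (n - 1))

/-- The code `c·R^n = {(c·b_0, …, c·b_(n-1)) : b ∈ R^n}`. -/
def scalarCode [CommRing R] (n : ℕ) (c : R) : Submodule R (Fin n → R) where
  carrier := {a | ∀ i, ∃ b, a i = c * b}
  add_mem' := by
    intro a a' ha ha' i
    obtain ⟨b, hb⟩ := ha i; obtain ⟨b', hb'⟩ := ha' i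
    exact ⟨b + b', by simp [hb, hb', mul_add]⟩
  zero_mem' := fun i => ⟨0, by simp⟩
  smul_mem' := by
    intro r a ha i
    obtain ⟨b, hb⟩ := ha i
    exact ⟨r * b, by simp [hb]; ring⟩

end Defs


/-- If `R` is a finite local commutative ring and `g` is a monic polynomial generating a
primary ideal of `R[X]`, then `R[X]/⟨g⟩` is a local ring. -/
theorem isLocalRing_quotient_of_primary {R : Type*} [CommRing R] [Finite R] [IsLocalRing R]
    (g : Polynomial R) (hg : g.Monic) (hprimary : (Ideal.span {g}).IsPrimary) :
    IsLocalRing (Polynomial R ⧸ Ideal.span {g}) := by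
  set I : Ideal (Polynomial R) := Ideal.span {g} with hI
  haveI hfin : Finite (Polynomial R ⧸ I) := by
    have : Module.Finite R (AdjoinRoot g) := (AdjoinRoot.powerBasis' hg).finite
    exact Module.finite_of_finite R (M := AdjoinRoot g)
  have hradp : I.radical.IsPrime := Ideal.isPrime_radical hprimary
  have hker : RingHom.ker (Ideal.Quotient.mk I) ≤ I.radical := by
    rw [Ideal.mk_ker]; exact Ideal.le_radical
  have hsurj : Function.Surjective (Ideal.Quotient.mk I) := Ideal.Quotient.mk_surjective
  have hnil : nilradical (Polynomial R ⧸ I) = I.radical.map (Ideal.Quotient.mk I) := by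
    rw [Ideal.map_radical_of_surjective hsurj (le_of_eq Ideal.mk_ker),
      Ideal.map_quotient_self]
    rfl
  have hprime : (nilradical (Polynomial R ⧸ I)).IsPrime := by
    rw [hnil]
    exact Ideal.map_isPrime_of_surjective hsurj hker
  have hmax : (nilradical (Polynomial R ⧸ I)).IsMaximal := by
    haveI := hprime
    haveI : Finite ((Polynomial R ⧸ I) ⧸ nilradical (Polynomial R ⧸ I)) :=
      Quotient.finite _
    haveI : IsDomain ((Polynomial R ⧸ I) ⧸ nilradical (Polynomial R ⧸ I)) :=
      Ideal.Quotient.isDomain _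
    have : IsField ((Polynomial R ⧸ I) ⧸ nilradical (Polynomial R ⧸ I)) :=
      Finite.isField_of_domain ((Polynomial R ⧸ I) ⧸ nilradical (Polynomial R ⧸ I))
    exact Ideal.Quotient.maximal_of_isField _ this
  exact @IsLocalRing.of_isMaximal_nilradical _ _ hmax
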